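/- Let v₁, v₂, v₃, v₄ be trace-zero 2×2 complex matrices, and set r_{ij} = -tr(v_i v_j), r_{ijk} = -tr(v_i v_j v_k). Then r_{123}•v₄ - r_{13}•(v₂*v₄) + r_{12}•(v₃*v₄) = r_{234}•v₁ + r_{34}•(v₁*v₂) - r_{24}•(v₁*v₃) as 2×2 matrices. -/
import Mathlib

open Matrix

theorem stmt_5 (v₁ v₂ v₃ v₄ : Matrix (Fin 2) (Fin 2) ℂ)
    (h₁ : trace v₁ = 0) (h₂ : trace v₂ = 0) (h₃ : trace v₃ = 0) (h₄ : trace v₄ = 0) :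
    (-(trace (v₁ * v₂ * v₃))) • v₄ - (-(trace (v₁ * v₃))) • (v₂ * v₄)
        + (-(trace (v₁ * v₂))) • (v₃ * v₄) =
      (-(trace (v₂ * v₃ * v₄))) • v₁ + (-(trace (v₃ * v₄))) • (v₁ * v₂)
        - (-(trace (v₂ * v₄))) • (v₁ * v₃) := by
  rw [trace_fin_two] at h₁ h₂ h₃ h₄
  have e₁ : v₁ 1 1 = -v₁ 0 0 := by linear_combination h₁
  have e₂ : v₂ 1 1 = -v₂ 0 0 := by linear_combination h₂
  have e₃ : v₃ 1 1 = -v₃ 0 0 := by linear_combination h₃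
  have e₄ : v₄ 1 1 = -v₄ 0 0 := by linear_combination h₄
  have e₁' : v₁ 1 1 = -v₁ 0 0 := by linear_combination h₁
  ext i j
  fin_cases i <;> fin_cases j <;>
    simp [Matrix.mul_apply, Matrix.trace_fin_two, Fin.sum_univ_two, e₁', e₂, e₃, e₄] <;> ring
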